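/- For every ε ∈ (0, 1/2), every real z ≥ 1, every integer k ≥ 1, and every γ ≥ 1, there exists ε'₀ > 0 depending only on ε, z, and γ such that the following holds for all 0 < ε' ≤ ε'₀ and every integer d ≥ 1. Let X ⊆ ℝ^d be finite, and let C' ⊆ ℝ^d be nonempty with |C'| ≤ k satisfying Cost(X, C') ≤ γ · Cost(X, C) for every nonempty finite C ⊆ ℝ^d with |C| ≤ k. Suppose that for each x ∈ X a point x' ∈ ℝ^d is given with ‖x − x'‖₂ ≤ ε' · dist(x, C'). Then for every nonempty finite C ⊆ ℝ^d with |C| ≤ k: (1 − ε) · Cost(X, C) ≤ Σ_{x∈X} dist(x', C)^z ≤ (1 + ε) · Cost(X, C). -/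

import Mathlib

open scoped BigOperators

/-- `dSet x C` is the distance from the point `x` to the finite set `C`. -/
noncomputable def dSet {d : ℕ} (x : EuclideanSpace ℝ (Fin d))
    (C : Finset (EuclideanSpace ℝ (Fin d))) : ℝ :=
  sInf ((fun c => dist x c) '' (C : Set (EuclideanSpace ℝ (Fin d))))

/-- `kzCost z X C = Σ_{x ∈ X} dist(x,C)^z`. -/
noncomputable def kzCost {d : ℕ} (z : ℝ) (X C : Finset (EuclideanSpace ℝ (Fin d))) : ℝ :=
  ∑ x ∈ X, dSet x C ^ z

lemma dSet_eq_infDist {d : ℕ} (x : EuclideanSpace ℝ (Fin d))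
    (C : Finset (EuclideanSpace ℝ (Fin d))) :
    dSet x C = Metric.infDist x (C : Set (EuclideanSpace ℝ (Fin d))) := by
  rw [dSet, Metric.infDist_eq_iInf, iInf, Set.image_eq_range]

lemma dSet_nonneg {d : ℕ} (x : EuclideanSpace ℝ (Fin d))
    (C : Finset (EuclideanSpace ℝ (Fin d))) : 0 ≤ dSet x C := by
  rw [dSet_eq_infDist]; exact Metric.infDist_nonneg

lemma dSet_lip {d : ℕ} (x y : EuclideanSpace ℝ (Fin d))
    (C : Finset (EuclideanSpace ℝ (Fin d))) :
    dSet x C ≤ dSet y C + dist x y := by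
  rw [dSet_eq_infDist, dSet_eq_infDist]
  exact Metric.infDist_le_infDist_add_dist

lemma key_upper (z τ D δ : ℝ) (hz : 1 ≤ z) (hτ : 0 < τ) (hD : 0 ≤ D) (hδ : 0 ≤ δ) :
    (D + δ) ^ z ≤ (1 + τ) ^ z * D ^ z + ((1 + τ) / τ) ^ z * δ ^ z := by
  have hz0 : (0:ℝ) ≤ z := by linarith
  rcases le_or_gt δ (τ * D) with h | h
  · have h1 : D + δ ≤ (1 + τ) * D := by nlinarith
    have h2 : (D + δ) ^ z ≤ ((1 + τ) * D) ^ z :=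
      Real.rpow_le_rpow (by linarith) h1 hz0
    rw [Real.mul_rpow (by linarith) hD] at h2
    have h3 : 0 ≤ ((1 + τ) / τ) ^ z * δ ^ z := by positivity
    linarith
  · have h1 : D + δ ≤ ((1 + τ) / τ) * δ := by
      rw [div_mul_eq_mul_div, le_div_iff₀ hτ]; nlinarith
    have h2 : (D + δ) ^ z ≤ (((1 + τ) / τ) * δ) ^ z :=
      Real.rpow_le_rpow (by linarith) h1 hz0
    rw [Real.mul_rpow (by positivity) hδ] at h2
    have h3 : 0 ≤ (1 + τ) ^ z * D ^ z := by positivity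
    linarith

lemma key_lower (z τ D D' δ : ℝ) (hz : 1 ≤ z) (hτ : 0 < τ) (hτ1 : τ ≤ 1)
    (hD : 0 ≤ D) (hD' : 0 ≤ D') (hδ : 0 ≤ δ) (h : D ≤ D' + δ) :
    D ^ z ≤ D' ^ z + (1 - (1 - τ) ^ z) * D ^ z + ((1 + τ) / τ) ^ z * δ ^ z := by
  have hz0 : (0:ℝ) ≤ z := by linarith
  rcases le_or_gt δ (τ * D) with hc | hc
  · have h1 : (1 - τ) * D ≤ D' := by nlinarith
    have h2 : ((1 - τ) * D) ^ z ≤ D' ^ z :=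
      Real.rpow_le_rpow (by nlinarith) h1 hz0
    rw [Real.mul_rpow (by linarith) hD] at h2
    have h3 : 0 ≤ ((1 + τ) / τ) ^ z * δ ^ z := by positivity
    linarith
  · have h1 : D ≤ ((1 + τ) / τ) * δ := by
      rw [div_mul_eq_mul_div, le_div_iff₀ hτ]; nlinarith
    have h2 : D ^ z ≤ (((1 + τ) / τ) * δ) ^ z :=
      Real.rpow_le_rpow hD h1 hz0
    rw [Real.mul_rpow (by positivity) hδ] at h2
    have h3 : (1 - τ) ^ z ≤ 1 :=
      Real.rpow_le_one (by linarith) (by linarith) hz0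
    have h4 : 0 ≤ D ^ z := Real.rpow_nonneg hD z
    have h5 : 0 ≤ D' ^ z := Real.rpow_nonneg hD' z
    nlinarith

/-- Rounding each point `x` of `X` to a point `x' = f x` with
`‖x − x'‖₂ ≤ ε'·dist(x,C')`, where `C'` is a `γ`-approximate set of at most `k` centers,
preserves the `(k,z)`-clustering cost of every candidate set of at most `k` centers up to a
`(1 ± ε)` factor, provided `ε'` is small enough depending only on `ε`, `z`, `γ`. -/
theorem rounded_offsets_strong_coreset
    (ε : ℝ) (hε0 : 0 < ε) (hε : ε < 1 / 2) (z : ℝ) (hz : 1 ≤ z)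
    (γ : ℝ) (hγ : 1 ≤ γ) :
    ∃ ε'₀ : ℝ, 0 < ε'₀ ∧
      ∀ (k : ℕ), 1 ≤ k → ∀ ε' : ℝ, 0 < ε' → ε' ≤ ε'₀ → ∀ (d : ℕ), 1 ≤ d →
        ∀ (X C' : Finset (EuclideanSpace ℝ (Fin d))), C'.Nonempty → C'.card ≤ k →
          (∀ C : Finset (EuclideanSpace ℝ (Fin d)), C.Nonempty → C.card ≤ k →
            kzCost z X C' ≤ γ * kzCost z X C) →
          ∀ f : EuclideanSpace ℝ (Fin d) → EuclideanSpace ℝ (Fin d),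
            (∀ x ∈ X, dist x (f x) ≤ ε' * dSet x C') →
            ∀ C : Finset (EuclideanSpace ℝ (Fin d)), C.Nonempty → C.card ≤ k →
              (1 - ε) * kzCost z X C ≤ ∑ x ∈ X, dSet (f x) C ^ z ∧
                ∑ x ∈ X, dSet (f x) C ^ z ≤ (1 + ε) * kzCost z X C := by
  have hz0 : (0:ℝ) < z := by linarith
  have hzne : z ≠ 0 := ne_of_gt hz0
  have hγ0 : (0:ℝ) < γ := by linarith
  have hcancel : ∀ a : ℝ, 0 ≤ a → (a ^ (1 / z)) ^ z = a := fun a ha => by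
    rw [← Real.rpow_mul ha, one_div, inv_mul_cancel₀ hzne, Real.rpow_one]
  set τ : ℝ := min ((1 + ε / 2) ^ (1 / z) - 1) (1 - (1 - ε / 2) ^ (1 / z)) with hτdef
  have h1lt : 1 < (1 + ε / 2) ^ (1 / z) := by
    rw [Real.one_lt_rpow_iff_of_pos (by linarith)]
    exact Or.inl ⟨by linarith, by positivity⟩
  have h2lt : (1 - ε / 2) ^ (1 / z) < 1 :=
    Real.rpow_lt_one (by linarith) (by linarith) (by positivity)
  have h2pos : 0 < (1 - ε / 2) ^ (1 / z) := Real.rpow_pos_of_pos (by linarith) _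
  have hτpos : 0 < τ := lt_min (by linarith) (by linarith)
  have hτle1 : τ ≤ 1 := le_trans (min_le_right _ _) (by linarith)
  refine ⟨τ / (1 + τ) * (ε / (2 * γ)) ^ (1 / z), by positivity, ?_⟩
  intro k hk ε' hε'pos hε'le d hd X C' hC'ne hC'card happrox f hf C hCne hCcard
  set A := kzCost z X C with hA
  set B := kzCost z X C' with hB
  have hA0 : 0 ≤ A := Finset.sum_nonneg fun x _ => Real.rpow_nonneg (dSet_nonneg x C) z
  have hBA : B ≤ γ * A := happrox C hCne hCcard
  have hB0 : 0 ≤ B := Finset.sum_nonneg fun x _ => Real.rpow_nonneg (dSet_nonneg x C') z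
  -- constants
  have hK1 : (1 + τ) ^ z ≤ 1 + ε / 2 := by
    have h1 : 1 + τ ≤ (1 + ε / 2) ^ (1 / z) := by
      have := min_le_left ((1 + ε / 2) ^ (1 / z) - 1) (1 - (1 - ε / 2) ^ (1 / z))
      linarith
    calc (1 + τ) ^ z ≤ ((1 + ε / 2) ^ (1 / z)) ^ z :=
          Real.rpow_le_rpow (by linarith) h1 (le_of_lt hz0)
      _ = 1 + ε / 2 := hcancel _ (by linarith)
  have hK3 : 1 - ε / 2 ≤ (1 - τ) ^ z := by
    have h1 : (1 - ε / 2) ^ (1 / z) ≤ 1 - τ := by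
      have := min_le_right ((1 + ε / 2) ^ (1 / z) - 1) (1 - (1 - ε / 2) ^ (1 / z))
      linarith
    calc 1 - ε / 2 = ((1 - ε / 2) ^ (1 / z)) ^ z := (hcancel _ (by linarith)).symm
      _ ≤ (1 - τ) ^ z := Real.rpow_le_rpow (le_of_lt h2pos) h1 (le_of_lt hz0)
  set K2 : ℝ := ((1 + τ) / τ) ^ z * ε' ^ z with hK2def
  have hK2nonneg : 0 ≤ K2 := by positivity
  have hK2 : K2 * γ ≤ ε / 2 := by
    have hmul : (1 + τ) / τ * ε' ≤ (ε / (2 * γ)) ^ (1 / z) := by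
      have h1 : (1 + τ) / τ * ε' ≤ (1 + τ) / τ * (τ / (1 + τ) * (ε / (2 * γ)) ^ (1 / z)) :=
        mul_le_mul_of_nonneg_left hε'le (by positivity)
      have h2 : (1 + τ) / τ * (τ / (1 + τ) * (ε / (2 * γ)) ^ (1 / z))
          = (ε / (2 * γ)) ^ (1 / z) := by
        field_simp
      linarith
    have hKeq : K2 = ((1 + τ) / τ * ε') ^ z := by
      rw [hK2def, ← Real.mul_rpow (by positivity) (le_of_lt hε'pos)]
    have hle : ((1 + τ) / τ * ε') ^ z ≤ ε / (2 * γ) := by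
      calc ((1 + τ) / τ * ε') ^ z ≤ ((ε / (2 * γ)) ^ (1 / z)) ^ z :=
            Real.rpow_le_rpow (by positivity) hmul (le_of_lt hz0)
        _ = ε / (2 * γ) := hcancel _ (by positivity)
    calc K2 * γ ≤ ε / (2 * γ) * γ := by
          rw [hKeq]; exact mul_le_mul_of_nonneg_right hle (by linarith)
      _ = ε / 2 := by field_simp
  -- pointwise bounds
  have hptU : ∀ x ∈ X, dSet (f x) C ^ z ≤ (1 + τ) ^ z * dSet x C ^ z + K2 * dSet x C' ^ z := by
    intro x hx
    have hδ : 0 ≤ dist x (f x) := dist_nonneg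
    have hS : 0 ≤ dSet x C' := dSet_nonneg x C'
    have hlip : dSet (f x) C ≤ dSet x C + dist x (f x) := by
      have := dSet_lip (f x) x C
      rwa [dist_comm (f x) x] at this
    have h1 : dSet (f x) C ^ z ≤ (dSet x C + dist x (f x)) ^ z :=
      Real.rpow_le_rpow (dSet_nonneg _ _) hlip (le_of_lt hz0)
    have h2 := key_upper z τ (dSet x C) (dist x (f x)) hz hτpos (dSet_nonneg x C) hδ
    have hδz : dist x (f x) ^ z ≤ ε' ^ z * dSet x C' ^ z := by
      calc dist x (f x) ^ z ≤ (ε' * dSet x C') ^ z :=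
            Real.rpow_le_rpow hδ (hf x hx) (le_of_lt hz0)
        _ = ε' ^ z * dSet x C' ^ z := Real.mul_rpow (le_of_lt hε'pos) hS
    have h3 : ((1 + τ) / τ) ^ z * dist x (f x) ^ z ≤ K2 * dSet x C' ^ z := by
      rw [hK2def, mul_assoc]
      exact mul_le_mul_of_nonneg_left hδz (by positivity)
    linarith
  have hptL : ∀ x ∈ X, dSet x C ^ z ≤
      dSet (f x) C ^ z + (1 - (1 - τ) ^ z) * dSet x C ^ z + K2 * dSet x C' ^ z := by
    intro x hx
    have hδ : 0 ≤ dist x (f x) := dist_nonneg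
    have hS : 0 ≤ dSet x C' := dSet_nonneg x C'
    have hlip : dSet x C ≤ dSet (f x) C + dist x (f x) := dSet_lip x (f x) C
    have h2 := key_lower z τ (dSet x C) (dSet (f x) C) (dist x (f x)) hz hτpos hτle1
      (dSet_nonneg x C) (dSet_nonneg (f x) C) hδ hlip
    have hδz : dist x (f x) ^ z ≤ ε' ^ z * dSet x C' ^ z := by
      calc dist x (f x) ^ z ≤ (ε' * dSet x C') ^ z :=
            Real.rpow_le_rpow hδ (hf x hx) (le_of_lt hz0)
        _ = ε' ^ z * dSet x C' ^ z := Real.mul_rpow (le_of_lt hε'pos) hS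
    have h3 : ((1 + τ) / τ) ^ z * dist x (f x) ^ z ≤ K2 * dSet x C' ^ z := by
      rw [hK2def, mul_assoc]
      exact mul_le_mul_of_nonneg_left hδz (by positivity)
    linarith
  -- sum them
  have hsumU : ∑ x ∈ X, dSet (f x) C ^ z ≤ (1 + τ) ^ z * A + K2 * B := by
    calc ∑ x ∈ X, dSet (f x) C ^ z
        ≤ ∑ x ∈ X, ((1 + τ) ^ z * dSet x C ^ z + K2 * dSet x C' ^ z) :=
          Finset.sum_le_sum hptU
      _ = (1 + τ) ^ z * A + K2 * B := by
          rw [Finset.sum_add_distrib, ← Finset.mul_sum, ← Finset.mul_sum]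
          simp [hA, hB, kzCost]
  have hsumL : A ≤ ∑ x ∈ X, dSet (f x) C ^ z + (1 - (1 - τ) ^ z) * A + K2 * B := by
    calc A = ∑ x ∈ X, dSet x C ^ z := rfl
      _ ≤ ∑ x ∈ X, (dSet (f x) C ^ z + (1 - (1 - τ) ^ z) * dSet x C ^ z
            + K2 * dSet x C' ^ z) := Finset.sum_le_sum hptL
      _ = ∑ x ∈ X, dSet (f x) C ^ z + (1 - (1 - τ) ^ z) * A + K2 * B := by
          rw [Finset.sum_add_distrib, Finset.sum_add_distrib, ← Finset.mul_sum,
            ← Finset.mul_sum]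
          simp [hA, hB, kzCost]
  have hKB : K2 * B ≤ (ε / 2) * A := by
    calc K2 * B ≤ K2 * (γ * A) := mul_le_mul_of_nonneg_left hBA hK2nonneg
      _ = (K2 * γ) * A := by ring
      _ ≤ (ε / 2) * A := mul_le_mul_of_nonneg_right hK2 hA0
  constructor
  · have h1 : (1 - (1 - τ) ^ z) * A ≤ (ε / 2) * A :=
      mul_le_mul_of_nonneg_right (by linarith) hA0
    linarith
  · have h1 : (1 + τ) ^ z * A ≤ (1 + ε / 2) * A :=
      mul_le_mul_of_nonneg_right hK1 hA0
    linarith
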